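/- Let k be a field, n ≥ 1, and let μ_1, …, μ_s be positive integers with μ_1 + … + μ_s = n. Put m^μ_0 = 0 and m^μ_i = μ_1 + … + μ_i, and for 1 ≤ j ≤ n let block(j) be the unique i with m^μ_{i−1} < j ≤ m^μ_i. Let r = max_i μ_i and for 1 ≤ t ≤ r set λ_t = #{ i : μ_i ≥ t } (so λ_1 ≥ … ≥ λ_r is the conjugate partition of μ and λ_1 + … + λ_r = n); set γ_j = λ_{j+1} + … + λ_r (so γ_0 = n and γ_r = 0), and for 1 ≤ i ≤ n let m_i be the unique j ∈ {1,…,r} with γ_j ≤ n − i < γ_{j−1}. Let A be an n×n matrix with entries in the formal power series ring k⟦x⟧ whose constant-term matrix A(0) (obtained by applying the constant-coefficient map entrywise) satisfies A(0)_{j l} = 0 whenever block(j) ≥ block(l). Write the characteristic polynomial of A as det(y·1_n − A) = y^n + b_1 y^{n−1} + … + b_n with b_i ∈ k⟦x⟧. Then x^{m_i} divides b_i in k⟦x⟧ for every 1 ≤ i ≤ n. -/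

import Mathlib

open Finset


lemma iter_exists {α : Type*} (b : α → ℕ) (g : α → α) (j : α) :
    ∃ t, b (g^[t] j) ≤ b (g^[t+1] j) := by
  by_contra h
  push_neg at h
  have key : ∀ t, b (g^[t] j) + t ≤ b j := by
    intro t
    induction t with
    | zero => simp
    | succ u ih =>
      have := h u
      omega
  have := key (b j + 1)
  omega

lemma count_le_filter {n : ℕ} (π : Equiv.Perm (Fin n)) (S : Finset (Fin n))
    (hS : ∀ j ∈ S, π j ∈ S) (b : Fin n → ℕ) (v : ℕ) :
    (S.filter (fun j => b j = v)).card ≤ (S.filter (fun j => b j ≤ b (π j))).card := by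
  classical
  set c : Fin n → ℕ := fun j => Nat.find (iter_exists b π j) with hc
  have hspec : ∀ j, b ((⇑π)^[c j] j) ≤ b ((⇑π)^[c j + 1] j) := fun j => Nat.find_spec (iter_exists b π j)
  have hmin : ∀ j, ∀ t < c j, b ((⇑π)^[t+1] j) < b ((⇑π)^[t] j) := by
    intro j t ht
    have := Nat.find_min (iter_exists b π j) ht
    omega
  have hdec : ∀ j, ∀ t ≤ c j, b ((⇑π)^[t] j) + t ≤ b j := by
    intro j t ht
    induction t with
    | zero => simp
    | succ u ih =>
      have h1 := hmin j u (by omega)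
      have h2 := ih (by omega)
      omega
  have hiter_mem : ∀ t, ∀ j ∈ S, (⇑π)^[t] j ∈ S := by
    intro t
    induction t with
    | zero => simp
    | succ u ih =>
      intro j hj
      rw [Function.iterate_succ_apply']
      exact hS _ (ih j hj)
  apply Finset.card_le_card_of_injOn (fun j => (⇑π)^[c j] j)
  · intro j hj
    simp only [mem_filter, Finset.mem_coe, coe_filter, Set.mem_setOf_eq] at hj ⊢
    refine ⟨hiter_mem _ _ hj.1, ?_⟩
    have := hspec j
    rwa [Function.iterate_succ_apply'] at this
  · intro j hj j' hj' heq
    simp only [coe_filter, Set.mem_setOf_eq] at hj hj'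
    -- key symmetric claim
    have key : ∀ x y : Fin n, b x = v → b y = v → c x ≤ c y →
        (⇑π)^[c x] x = (⇑π)^[c y] y → x = y := by
      intro x y hx hy hle he
      have hdecomp : (⇑π)^[c y] y = (⇑π)^[c x] ((⇑π)^[c y - c x] y) := by
        rw [← Function.iterate_add_apply]
        congr 1
        omega
      rw [hdecomp] at he
      have hinj : Function.Injective ((⇑π)^[c x]) := Function.Injective.iterate π.injective _
      have hxy : x = (⇑π)^[c y - c x] y := hinj he
      rcases Nat.eq_zero_or_pos (c y - c x) with h0 | hpos
      · rw [h0] at hxy; simpa using hxy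
      · have := hdec y (c y - c x) (by omega)
        rw [← hxy, hx, hy] at this
        omega
    rcases le_total (c j) (c j') with h | h
    · exact key j j' hj.2 hj'.2 h heq
    · exact (key j' j hj'.2 hj.2 h heq.symm).symm

lemma conj_sum {s n : ℕ} (μ : Fin s → ℕ) (hμsum : ∑ i, μ i = n)
    (lam : ℕ → ℕ)
    (hlam : ∀ t, lam t = (Finset.univ.filter (fun i : Fin s => t ≤ μ i)).card)
    (r : ℕ) (hr : r = Finset.univ.sup μ)
    (γ : ℕ → ℕ) (hγ : ∀ j, γ j = ∑ t ∈ Finset.Icc (j + 1) r, lam t)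
    (D : ℕ) :
    γ D + ∑ v, min (μ v) D = n := by
  classical
  have hμr : ∀ v, μ v ≤ r := by
    intro v; rw [hr]; exact Finset.le_sup (mem_univ v)
  have key : ∀ E : ℕ, ∑ t ∈ Finset.Ioc 0 E, lam t = ∑ v, min (μ v) E := by
    intro E
    have h1 : ∀ t, lam t = ∑ v : Fin s, if t ≤ μ v then 1 else 0 := by
      intro t; rw [hlam, Finset.card_filter]
    simp_rw [h1]
    rw [Finset.sum_comm]
    refine Finset.sum_congr rfl fun v _ => ?_
    rw [← Finset.card_filter]
    have : (Finset.Ioc 0 E).filter (fun x => x ≤ μ v) = Finset.Ioc 0 (min (μ v) E) := by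
      ext x; simp only [Finset.mem_filter, Finset.mem_Ioc]; omega
    rw [this, Nat.card_Ioc]
    omega
  have hlam0 : ∀ t, r < t → lam t = 0 := by
    intro t ht
    rw [hlam, Finset.card_eq_zero, Finset.filter_eq_empty_iff]
    intro v _
    have := hμr v
    omega
  have hγD : γ D = ∑ t ∈ Finset.Ioc D r, lam t := by
    rw [hγ, Finset.Icc_add_one_left_eq_Ioc]
  have hn : ∑ t ∈ Finset.Ioc 0 r, lam t = n := by
    rw [key r, ← hμsum]
    exact Finset.sum_congr rfl fun v _ => min_eq_left (hμr v)
  rcases le_total D r with h | h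
  · rw [hγD, ← key D, Nat.add_comm, Finset.sum_Ioc_consecutive _ (Nat.zero_le D) h, hn]
  · rw [← key D, hγD, Finset.Ioc_eq_empty (by omega), Finset.sum_empty, Nat.zero_add,
      ← Finset.sum_Ioc_consecutive lam (Nat.zero_le r) h, hn]
    have : ∑ t ∈ Finset.Ioc r D, lam t = 0 :=
      Finset.sum_eq_zero fun t ht => hlam0 t (Finset.mem_Ioc.mp ht).1
    omega

lemma block_count {n s : ℕ} (μ : Fin s → ℕ) (hμsum : ∑ i, μ i = n)
    (mμ : ℕ → ℕ)
    (hmμ : ∀ i, mμ i = ∑ j ∈ Finset.univ.filter (fun j : Fin s => (j : ℕ) < i), μ j)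
    (block : Fin n → ℕ)
    (hblock : ∀ j, block j = sInf {i : ℕ | (j : ℕ) < mμ i})
    (S : Finset (Fin n)) (D : ℕ)
    (hD : ∀ v : ℕ, (S.filter (fun j => block j = v)).card ≤ D) :
    S.card ≤ ∑ v, min (μ v) D := by
  classical
  have hmμs : mμ s = n := by
    rw [hmμ, ← hμsum]
    apply Finset.sum_congr _ (fun _ _ => rfl)
    rw [Finset.filter_true_of_mem]
    intro j _
    exact j.isLt
  have hne : ∀ j : Fin n, {i : ℕ | (j : ℕ) < mμ i}.Nonempty := by
    intro j
    exact ⟨s, by simp only [Set.mem_setOf_eq, hmμs]; exact j.isLt⟩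
  have hmem : ∀ j : Fin n, (j : ℕ) < mμ (block j) := by
    intro j
    rw [hblock]
    exact Nat.sInf_mem (hne j)
  have hlb : ∀ (j : Fin n) (w : ℕ), w < block j → mμ w ≤ (j : ℕ) := by
    intro j w hw
    rw [hblock] at hw
    by_contra h
    push_neg at h
    have hw2 : w ∈ {i : ℕ | (j : ℕ) < mμ i} := h
    have := Nat.sInf_le hw2
    omega
  have hmμ0 : mμ 0 = 0 := by
    rw [hmμ]
    simp
  have hble : ∀ j : Fin n, block j ≤ s := by
    intro j
    rw [hblock]
    exact Nat.sInf_le (by simp only [Set.mem_setOf_eq, hmμs]; exact j.isLt)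
  have hbpos : ∀ j : Fin n, 1 ≤ block j := by
    intro j
    by_contra h
    have h0 : block j = 0 := by omega
    have := hmem j
    rw [h0, hmμ0] at this
    omega
  have hstep : ∀ v : Fin s, mμ ((v : ℕ) + 1) = mμ (v : ℕ) + μ v := by
    intro v
    rw [hmμ, hmμ]
    have : (Finset.univ.filter (fun j : Fin s => (j : ℕ) < (v : ℕ) + 1))
        = insert v (Finset.univ.filter (fun j : Fin s => (j : ℕ) < (v : ℕ))) := by
      ext x
      simp only [Finset.mem_filter, Finset.mem_insert, Finset.mem_univ, true_and,
        Fin.ext_iff]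
      omega
    rw [this, Finset.sum_insert (by simp), Nat.add_comm]
  -- fiberwise count
  have hfib : S.card = ∑ v : Fin s, (S.filter (fun j => block j = (v : ℕ) + 1)).card := by
    rw [Finset.card_eq_sum_card_fiberwise
      (f := fun j => block j) (t := Finset.univ.image (fun v : Fin s => (v : ℕ) + 1)) ?_]
    · rw [Finset.sum_image (by intro a _ b _ h; exact Fin.ext (by have h' : (a : ℕ) + 1 = b + 1 := h; omega))]
    · intro j hj
      simp only [Finset.mem_coe, Finset.mem_image, Finset.mem_univ, true_and]
      have h1 := hbpos j
      have h2 := hble j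
      have hslt : block j - 1 < s := by omega
      exact ⟨⟨block j - 1, hslt⟩, by simp; omega⟩
  rw [hfib]
  apply Finset.sum_le_sum
  intro v _
  rcases le_total (μ v) D with h | h
  · rw [min_eq_left h]
    -- count ≤ μ v via interval
    calc (S.filter (fun j => block j = (v : ℕ) + 1)).card
        ≤ (Finset.Ico (mμ (v : ℕ)) (mμ (v : ℕ) + μ v)).card := by
          refine Finset.card_le_card_of_injOn (fun j : Fin n => (j : ℕ)) ?_ ?_
          · intro j hj
            simp only [Finset.coe_filter, Set.mem_setOf_eq, Finset.mem_filter, Finset.mem_coe] at hj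
            have h1 : (j : ℕ) < mμ (block j) := hmem j
            have h2 : mμ ((v : ℕ)) ≤ (j : ℕ) := hlb j _ (by omega)
            rw [hj.2, hstep v] at h1
            simp only [Finset.mem_coe, Finset.mem_Ico]
            omega
          · intro a _ b _ h
            exact Fin.ext h
      _ = μ v := by rw [Nat.card_Ico]; omega
  · rw [min_eq_right h]
    exact hD _

/-- Local form of Lemma 2.1 ('inclusion'): if the constant-term matrix of
`A ∈ Mₙ(k⟦x⟧)` is strictly upper-triangular with respect to the block structure of the
composition `μ` (i.e. `A(0)_{jl} = 0` whenever `block(j) ≥ block(l)`), then the coefficient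
`bᵢ` of `y^{n-i}` in `det(y·1ₙ - A)` is divisible by `x^{mᵢ}`, where `mᵢ` is determined by
the conjugate partition `λ` of `μ` via `γ_{mᵢ} ≤ n - i < γ_{mᵢ - 1}`. -/
theorem stmt_0 (k : Type*) [Field k] (n s : ℕ) (hn : 1 ≤ n)
    (μ : Fin s → ℕ) (hμpos : ∀ i, 0 < μ i) (hμsum : ∑ i, μ i = n)
    (mμ : ℕ → ℕ)
    (hmμ : ∀ i, mμ i = ∑ j ∈ Finset.univ.filter (fun j : Fin s => (j : ℕ) < i), μ j)
    (block : Fin n → ℕ)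
    (hblock : ∀ j, block j = sInf {i : ℕ | (j : ℕ) < mμ i})
    (lam : ℕ → ℕ)
    (hlam : ∀ t, lam t = (Finset.univ.filter (fun i : Fin s => t ≤ μ i)).card)
    (r : ℕ) (hr : r = Finset.univ.sup μ)
    (γ : ℕ → ℕ) (hγ : ∀ j, γ j = ∑ t ∈ Finset.Icc (j + 1) r, lam t)
    (m : ℕ → ℕ) (hm : ∀ i, m i = sInf {j : ℕ | γ j ≤ n - i})
    (A : Matrix (Fin n) (Fin n) (PowerSeries k))
    (hA : ∀ j l : Fin n, block l ≤ block j → PowerSeries.constantCoeff (R := k) (A j l) = 0)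
    (i : ℕ) (hi1 : 1 ≤ i) (hin : i ≤ n) :
    (PowerSeries.X : PowerSeries k) ^ m i ∣ A.charpoly.coeff (n - i) := by
  classical
  rw [Matrix.charpoly, Matrix.det_apply, Polynomial.finset_sum_coeff]
  apply Finset.dvd_sum
  intro σ _
  rw [Polynomial.coeff_smul]
  suffices h : (PowerSeries.X : PowerSeries k) ^ m i ∣
      (∏ j, Matrix.charmatrix A (σ j) j).coeff (n - i) by
    rcases Int.units_eq_one_or (Equiv.Perm.sign σ) with hs | hs <;>
      simp only [hs, one_smul, Units.neg_smul, dvd_neg] <;> exact h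
  set f : Fin n → Polynomial (PowerSeries k) :=
    fun j => if σ j = j then Polynomial.X else 0 with hf
  set g : Fin n → Polynomial (PowerSeries k) :=
    fun j => -Polynomial.C (A (σ j) j) with hg
  have hentry : ∀ j, Matrix.charmatrix A (σ j) j = f j + g j := by
    intro j
    by_cases h : σ j = j
    · rw [h, Matrix.charmatrix_apply_eq, hf, hg]
      simp [h, sub_eq_add_neg]
    · rw [Matrix.charmatrix_apply_ne _ _ _ h, hf, hg]
      simp [h]
  simp_rw [hentry]
  rw [Fintype.prod_add, Polynomial.finset_sum_coeff]
  apply Finset.dvd_sum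
  intro T _
  by_cases hT : ∀ j ∈ T, σ j = j
  · -- T consists of fixed points
    have hprodf : ∏ j ∈ T, f j = Polynomial.X ^ T.card := by
      rw [← Finset.prod_const]
      exact Finset.prod_congr rfl fun j hj => by simp [hf, hT j hj]
    have hprodg : ∏ j ∈ Tᶜ, g j = Polynomial.C (∏ j ∈ Tᶜ, -(A (σ j) j)) := by
      rw [map_prod]
      exact Finset.prod_congr rfl fun j _ => by simp [hg]
    rw [hprodf, hprodg, mul_comm, Polynomial.coeff_C_mul, Polynomial.coeff_X_pow]
    by_cases hcard : n - i = T.card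
    · rw [if_pos hcard, mul_one]
      -- now the combinatorial heart
      set S := Tᶜ with hS
      have hScard : S.card = i := by
        rw [hS, Finset.card_compl, Fintype.card_fin]
        omega
      have hSinv : ∀ j ∈ S, σ j ∈ S := by
        intro j hj
        simp only [hS, Finset.mem_compl] at hj ⊢
        intro hmem
        have h1 : σ (σ j) = σ j := hT _ hmem
        have h2 : σ j = j := σ.injective h1
        rw [h2] at hmem
        exact hj hmem
      set F := S.filter (fun j => block j ≤ block (σ j)) with hF
      set D := F.card with hD
      have hcnt : ∀ v : ℕ, (S.filter (fun j => block j = v)).card ≤ D :=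
        fun v => count_le_filter σ S hSinv block v
      have hsum : S.card ≤ ∑ v, min (μ v) D :=
        block_count μ hμsum mμ hmμ block hblock S D hcnt
      have hγn : γ D + ∑ v, min (μ v) D = n := conj_sum μ hμsum lam hlam r hr γ hγ D
      have hγD : γ D ≤ n - i := by omega
      have hmD : m i ≤ D := by
        rw [hm]
        exact Nat.sInf_le hγD
      have hXD : (PowerSeries.X : PowerSeries k) ^ D ∣ ∏ j ∈ S, -(A (σ j) j) := by
        rw [← Finset.prod_filter_mul_prod_filter_not S (fun j => block j ≤ block (σ j))]
        apply dvd_mul_of_dvd_left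
        have : (PowerSeries.X : PowerSeries k) ^ D = ∏ j ∈ F, PowerSeries.X := by
          rw [Finset.prod_const, hD]
        rw [this]
        apply Finset.prod_dvd_prod_of_dvd
        intro j hj
        rw [PowerSeries.X_dvd_iff, map_neg, hA (σ j) j (Finset.mem_filter.mp hj).2, neg_zero]
      exact dvd_trans (pow_dvd_pow _ hmD) hXD
    · rw [if_neg hcard, mul_zero]
      exact dvd_zero _
  · -- some j in T is not fixed: the product of f vanishes
    push_neg at hT
    obtain ⟨j, hjT, hj⟩ := hT
    have : ∏ j ∈ T, f j = 0 := Finset.prod_eq_zero hjT (by simp [hf, hj])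
    rw [this, zero_mul, Polynomial.coeff_zero]
    exact dvd_zero _
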